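/- Let k ≥ 2 be an integer and let n, g, w, t be positive integers. If there exist a k-SCHGDD of type (n, (gw)^t) and a k-SCHGDD of type (n, g^w), then there exists a k-SCHGDD of type (n, g^{wt}). -/
import Mathlib


/-- A `k`-SCHGDD of type `(n, m^t)`: a finite family of `k`-element base blocks in
`Fin n × ZMod (m*t)` such that no block has two points in the same group (same first
coordinate), and for every ordered pair `i ≠ j` the difference list `Δ_{ij}` covers
`ZMod (m*t)` minus the subgroup generated by `t` exactly once, hitting no element of
that subgroup. -/
def IsSCHGDD (k n m t : ℕ) (B : Finset (Finset (Fin n × ZMod (m * t)))) : Prop :=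
  (∀ b ∈ B, b.card = k) ∧
  (∀ b ∈ B, ∀ p ∈ b, ∀ q ∈ b, p.1 = q.1 → p = q) ∧
  (∀ i j : Fin n, i ≠ j → ∀ z : ZMod (m * t),
    (z ∈ AddSubgroup.zmultiples ((t : ZMod (m * t))) →
      (∑ b ∈ B, ((b ×ˢ b).filter
        (fun pq => pq.1.1 = i ∧ pq.2.1 = j ∧ pq.1.2 - pq.2.2 = z)).card) = 0) ∧
    (z ∉ AddSubgroup.zmultiples ((t : ZMod (m * t))) →
      (∑ b ∈ B, ((b ×ˢ b).filter
        (fun pq => pq.1.1 = i ∧ pq.2.1 = j ∧ pq.1.2 - pq.2.2 = z)).card) = 1))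

/-- Existence of a `k`-SCHGDD of type `(n, m^t)`. -/
def ExistsSCHGDD (k n m t : ℕ) : Prop :=
  ∃ B : Finset (Finset (Fin n × ZMod (m * t))), IsSCHGDD k n m t B

open Finset AddSubgroup in
/-- Construction 3.1: if there exist a `k`-SCHGDD of type `(n, (g*w)^t)` and a
`k`-SCHGDD of type `(n, g^w)`, then there exists a `k`-SCHGDD of type `(n, g^(w*t))`. -/
theorem schgdd_filling (k n g w t : ℕ) (hk : 2 ≤ k) (hn : 0 < n) (hg : 0 < g)
    (hw : 0 < w) (ht : 0 < t)
    (h1 : ExistsSCHGDD k n (g * w) t) (h2 : ExistsSCHGDD k n g w) :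
    ExistsSCHGDD k n g (w * t) := by
  obtain ⟨B1, hB1card, hB1grp, hB1diff⟩ := h1
  obtain ⟨B2, hB2card, hB2grp, hB2diff⟩ := h2
  unfold ExistsSCHGDD IsSCHGDD
  rw [show g * (w * t) = g * w * t from (mul_assoc g w t).symm]
  have htZ : (t : ℤ) ≠ 0 := by exact_mod_cast ht.ne'
  -- the embedding φ : ZMod (g*w) →+ ZMod (g*w*t), x ↦ t * x̃
  have hker : (zmultiplesHom (ZMod (g*w*t)) ((t : ZMod (g*w*t)))) (((g*w : ℕ) : ℤ)) = 0 := by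
    simp only [zmultiplesHom_apply, zsmul_eq_mul]
    have : (((g*w : ℕ) : ℤ) : ZMod (g*w*t)) * (t : ZMod (g*w*t)) = ((g*w*t : ℕ) : ZMod (g*w*t)) := by
      push_cast; ring
    rw [this, ZMod.natCast_self]
  set φ : ZMod (g*w) →+ ZMod (g*w*t) :=
    ZMod.lift (g*w) ⟨zmultiplesHom (ZMod (g*w*t)) ((t : ZMod (g*w*t))), hker⟩ with hφdef
  have hφint : ∀ c : ℤ, φ ((c : ZMod (g*w))) = c • ((t : ZMod (g*w*t))) := by
    intro c
    rw [hφdef, ZMod.lift_coe]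
    rfl
  have hφinj : Function.Injective φ := by
    rw [injective_iff_map_eq_zero]
    intro x hx
    obtain ⟨c, rfl⟩ := ZMod.intCast_surjective x
    rw [hφint] at hx
    have hx' : ((c * t : ℤ) : ZMod (g*w*t)) = 0 := by
      rw [← hx]; push_cast [zsmul_eq_mul]; ring
    rw [ZMod.intCast_zmod_eq_zero_iff_dvd] at hx'
    rw [ZMod.intCast_zmod_eq_zero_iff_dvd]
    have he : ((g*w : ℕ) : ℤ) * (t : ℤ) = ((g*w*t : ℕ) : ℤ) := by push_cast; ring
    have : ((g*w : ℕ) : ℤ) * (t : ℤ) ∣ c * (t : ℤ) := by rw [he]; exact hx'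
    exact (mul_dvd_mul_iff_right htZ).mp this
  have hφrange : ∀ x : ZMod (g*w), φ x ∈ zmultiples ((t : ZMod (g*w*t))) := by
    intro x
    obtain ⟨c, rfl⟩ := ZMod.intCast_surjective x
    rw [hφint]
    exact zsmul_mem (mem_zmultiples _) c
  have hφsurj : ∀ z : ZMod (g*w*t), z ∈ zmultiples ((t : ZMod (g*w*t))) → ∃ x, φ x = z := by
    intro z hz
    obtain ⟨c, rfl⟩ := mem_zmultiples_iff.mp hz
    exact ⟨(c : ZMod (g*w)), hφint c⟩
  have hφw : φ ((w : ZMod (g*w))) = ((w*t : ℕ) : ZMod (g*w*t)) := by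
    have : ((w : ZMod (g*w))) = (((w : ℤ)) : ZMod (g*w)) := by push_cast; rfl
    rw [this, hφint]
    push_cast [zsmul_eq_mul]; ring
  have hφsub : ∀ x : ZMod (g*w),
      x ∈ zmultiples ((w : ZMod (g*w))) ↔ φ x ∈ zmultiples (((w*t : ℕ) : ZMod (g*w*t))) := by
    intro x
    constructor
    · rintro hx
      obtain ⟨c, rfl⟩ := mem_zmultiples_iff.mp hx
      rw [map_zsmul, hφw]
      exact zsmul_mem (mem_zmultiples _) c
    · intro hx
      obtain ⟨c, hc⟩ := mem_zmultiples_iff.mp hx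
      have : φ (c • ((w : ZMod (g*w)))) = φ x := by rw [map_zsmul, hφw, hc]
      rw [← hφinj this]
      exact zsmul_mem (mem_zmultiples _) c
  -- the point map
  set Φ : Fin n × ZMod (g*w) → Fin n × ZMod (g*w*t) := fun p => (p.1, φ p.2) with hΦdef
  have hΦinj : Function.Injective Φ := by
    intro p q hpq
    simp only [hΦdef, Prod.mk.injEq] at hpq
    exact Prod.ext hpq.1 (hφinj hpq.2)
  set B2' : Finset (Finset (Fin n × ZMod (g*w*t))) := B2.image (fun b => b.image Φ) with hB2'def
  -- members of B2'
  have hB2'mem : ∀ b ∈ B2', ∃ b0 ∈ B2, b = b0.image Φ := by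
    intro b hb
    obtain ⟨b0, hb0, rfl⟩ := Finset.mem_image.mp hb
    exact ⟨b0, hb0, rfl⟩
  -- blocks of B1 have no between-group difference in zmultiples t
  have hB1nd : ∀ b ∈ B1, ∀ p ∈ b, ∀ q ∈ b, p.1 ≠ q.1 →
      p.2 - q.2 ∉ zmultiples ((t : ZMod (g*w*t))) := by
    intro b hb p hp q hq hne hmem
    have h0 := (hB1diff p.1 q.1 hne (p.2 - q.2)).1 hmem
    have hb0 : ((b ×ˢ b).filter
        (fun pq => pq.1.1 = p.1 ∧ pq.2.1 = q.1 ∧ pq.1.2 - pq.2.2 = p.2 - q.2)).card = 0 :=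
      (Finset.sum_eq_zero_iff.mp h0) b hb
    rw [Finset.card_eq_zero, Finset.filter_eq_empty_iff] at hb0
    have hmem' : (p, q) ∈ b ×ˢ b := Finset.mem_product.mpr ⟨hp, hq⟩
    exact hb0 hmem' ⟨rfl, rfl, rfl⟩
  -- disjointness
  have hdisj : Disjoint B1 B2' := by
    rw [Finset.disjoint_left]
    intro b hb1 hb2
    obtain ⟨b0, hb0, rfl⟩ := hB2'mem b hb2
    have hcard : (b0.image Φ).card = k := hB1card _ hb1
    have h2le : 1 < (b0.image Φ).card := by omega
    obtain ⟨p, hp, q, hq, hpq⟩ := Finset.one_lt_card.mp h2le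
    obtain ⟨p0, hp0, rfl⟩ := Finset.mem_image.mp hp
    obtain ⟨q0, hq0, rfl⟩ := Finset.mem_image.mp hq
    have hne : (Φ p0).1 ≠ (Φ q0).1 := by
      intro h
      exact hpq (hB1grp _ hb1 _ hp _ hq h)
    have : (Φ p0).2 - (Φ q0).2 ∈ zmultiples ((t : ZMod (g*w*t))) := by
      have : (Φ p0).2 - (Φ q0).2 = φ (p0.2 - q0.2) := by
        rw [hΦdef]; simp [map_sub]
      rw [this]; exact hφrange _
    exact hB1nd _ hb1 _ hp _ hq hne this
  -- counting for B2'
  have hsum2 : ∀ i j : Fin n, ∀ z : ZMod (g*w*t),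
      (∑ b ∈ B2', ((b ×ˢ b).filter
        (fun pq => pq.1.1 = i ∧ pq.2.1 = j ∧ pq.1.2 - pq.2.2 = z)).card)
      = ∑ b ∈ B2, ((b ×ˢ b).filter
        (fun pq => pq.1.1 = i ∧ pq.2.1 = j ∧ φ (pq.1.2 - pq.2.2) = z)).card := by
    intro i j z
    rw [hB2'def, Finset.sum_image]
    · apply Finset.sum_congr rfl
      intro b hb
      have hprod : (b.image Φ) ×ˢ (b.image Φ)
          = (b ×ˢ b).image (fun pq => (Φ pq.1, Φ pq.2)) := by
        ext PQ
        constructor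
        · intro hPQ
          rw [Finset.mem_product] at hPQ
          obtain ⟨p, hp, hP⟩ := Finset.mem_image.mp hPQ.1
          obtain ⟨q, hq, hQ⟩ := Finset.mem_image.mp hPQ.2
          exact Finset.mem_image.mpr ⟨(p, q), Finset.mem_product.mpr ⟨hp, hq⟩,
            Prod.ext hP hQ⟩
        · intro hPQ
          obtain ⟨pq, hpq, hE⟩ := Finset.mem_image.mp hPQ
          rw [Finset.mem_product] at hpq
          rw [Finset.mem_product, ← hE]
          exact ⟨Finset.mem_image_of_mem _ hpq.1, Finset.mem_image_of_mem _ hpq.2⟩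
      rw [hprod, Finset.filter_image]
      rw [Finset.card_image_of_injective _ (fun a b hab => by
        injection hab with h1 h2
        exact Prod.ext (hΦinj h1) (hΦinj h2))]
      congr 1
      apply Finset.filter_congr
      intro pq _
      rw [hΦdef]
      simp only [map_sub]
    · intro b1 hb1 b2 hb2 h
      exact Finset.image_injective hΦinj h
  -- put the design together
  refine ⟨B1 ∪ B2', ?_, ?_, ?_⟩
  · intro b hb
    rcases Finset.mem_union.mp hb with hb | hb
    · exact hB1card b hb
    · obtain ⟨b0, hb0, rfl⟩ := hB2'mem b hb
      rw [Finset.card_image_of_injective _ hΦinj]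
      exact hB2card b0 hb0
  · intro b hb p hp q hq hpq1
    rcases Finset.mem_union.mp hb with hb | hb
    · exact hB1grp b hb p hp q hq hpq1
    · obtain ⟨b0, hb0, rfl⟩ := hB2'mem b hb
      obtain ⟨p0, hp0, rfl⟩ := Finset.mem_image.mp hp
      obtain ⟨q0, hq0, rfl⟩ := Finset.mem_image.mp hq
      have : p0 = q0 := hB2grp b0 hb0 p0 hp0 q0 hq0 hpq1
      rw [this]
  · intro i j hij z
    have hsplit : (∑ b ∈ B1 ∪ B2', ((b ×ˢ b).filter
        (fun pq => pq.1.1 = i ∧ pq.2.1 = j ∧ pq.1.2 - pq.2.2 = z)).card)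
        = (∑ b ∈ B1, ((b ×ˢ b).filter
        (fun pq => pq.1.1 = i ∧ pq.2.1 = j ∧ pq.1.2 - pq.2.2 = z)).card)
        + (∑ b ∈ B2', ((b ×ˢ b).filter
        (fun pq => pq.1.1 = i ∧ pq.2.1 = j ∧ pq.1.2 - pq.2.2 = z)).card) :=
      Finset.sum_union hdisj
    constructor
    · intro hz
      -- z is a multiple of w*t
      obtain ⟨c, rfl⟩ := mem_zmultiples_iff.mp hz
      set x : ZMod (g*w) := c • ((w : ZMod (g*w))) with hxdef
      have hφx : φ x = c • ((w*t : ℕ) : ZMod (g*w*t)) := by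
        rw [hxdef, map_zsmul, hφw]
      have hxin : x ∈ zmultiples ((w : ZMod (g*w))) := zsmul_mem (mem_zmultiples _) c
      have hzt : c • (((w*t : ℕ)) : ZMod (g*w*t)) ∈ zmultiples ((t : ZMod (g*w*t))) := by
        rw [← hφx]; exact hφrange x
      rw [hsplit, (hB1diff i j hij _).1 hzt, hsum2 i j _]
      have : (∑ b ∈ B2, ((b ×ˢ b).filter
          (fun pq => pq.1.1 = i ∧ pq.2.1 = j ∧ φ (pq.1.2 - pq.2.2)
            = c • (((w*t : ℕ)) : ZMod (g*w*t)))).card)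
          = ∑ b ∈ B2, ((b ×ˢ b).filter
          (fun pq => pq.1.1 = i ∧ pq.2.1 = j ∧ pq.1.2 - pq.2.2 = x)).card := by
        apply Finset.sum_congr rfl
        intro b _
        congr 1
        apply Finset.filter_congr
        intro pq _
        rw [← hφx]
        simp only [hφinj.eq_iff]
      rw [this, (hB2diff i j hij x).1 hxin]
    · intro hz
      by_cases hzt : z ∈ zmultiples ((t : ZMod (g*w*t)))
      · -- z is a multiple of t but not of w*t : filled by B2'
        obtain ⟨x, rfl⟩ := hφsurj z hzt
        have hxout : x ∉ zmultiples ((w : ZMod (g*w))) := fun hx => hz ((hφsub x).mp hx)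
        rw [hsplit, (hB1diff i j hij _).1 hzt, hsum2 i j _]
        have : (∑ b ∈ B2, ((b ×ˢ b).filter
            (fun pq => pq.1.1 = i ∧ pq.2.1 = j ∧ φ (pq.1.2 - pq.2.2) = φ x)).card)
            = ∑ b ∈ B2, ((b ×ˢ b).filter
            (fun pq => pq.1.1 = i ∧ pq.2.1 = j ∧ pq.1.2 - pq.2.2 = x)).card := by
          apply Finset.sum_congr rfl
          intro b _
          congr 1
          apply Finset.filter_congr
          intro pq _
          simp only [hφinj.eq_iff]
        rw [this, (hB2diff i j hij x).2 hxout]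
      · -- z is not a multiple of t : covered by B1
        rw [hsplit, (hB1diff i j hij z).2 hzt, hsum2 i j z]
        have : (∑ b ∈ B2, ((b ×ˢ b).filter
            (fun pq => pq.1.1 = i ∧ pq.2.1 = j ∧ φ (pq.1.2 - pq.2.2) = z)).card) = 0 := by
          apply Finset.sum_eq_zero
          intro b _
          rw [Finset.card_eq_zero, Finset.filter_eq_empty_iff]
          rintro pq _ ⟨_, _, hzz⟩
          exact hzt (hzz ▸ hφrange _)
        rw [this]
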